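/- On the quantum Grassmann superalgebra Ω_q(m|n), the q-derivatives satisfy the skew-commutation relations ∂_i ∂_j = θ(ε_i, ε_j) ∂_j ∂_i for i ≠ j, and ∂_j² = 0 for j ∈ I₁ = {m+1,…,m+n}; here θ(ε_i,ε_j) = q^{ε_i∗ε_j − ε_j∗ε_i} if i ∈ I₀ or j ∈ I₀, and θ(ε_i,ε_j) = (−q)^{ε_i∗ε_j − ε_j∗ε_i} if i, j ∈ I₁. In particular for i < j: ∂_j∂_i = q ∂_i∂_j when i ≤ m, and ∂_j∂_i = −q ∂_i∂_j when i, j > m. -/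
import Mathlib


/-- Index set of the monomial basis `x^(β) ⊗ x^μ` of `Ω_q(m|n)`. -/
abbrev OmegaIdx (m n : ℕ) := (Fin m → ℕ) × (Fin n → ℕ)

/-- The underlying vector space of the quantum Grassmann superalgebra `Ω_q(m|n)`. -/
abbrev Omega (k : Type*) [Field k] (m n : ℕ) := OmegaIdx m n →₀ k

/-- Image of the basis vector `x^(β) ⊗ x^μ` under the `q`-derivative `∂_i`:
for `i ∈ I₀`, `∂_i(x^(β)⊗x^μ) = q^{−ε_i∗β} x^(β−ε_i)⊗x^μ`; for `i ∈ I₁`,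
`∂_i(x^(β)⊗x^μ) = q^{−ε_i∗β}(−q)^{−ε_i∗μ} δ_{μ_i,1} x^(β)⊗x^{μ−ε_i}`;
terms with negative exponents vanish. -/
noncomputable def Dimage {k : Type*} [Field k] (q : k) (m n : ℕ)
    (i : Fin (m + n)) (p : OmegaIdx m n) : Omega k m n :=
  if h : (i : ℕ) < m then
    if p.1 ⟨i, h⟩ = 0 then 0
    else (q ^ (-(∑ s ∈ Finset.univ.filter (fun s : Fin m => (s : ℕ) < (i : ℕ)),
          (p.1 s : ℤ)))) • Finsupp.single (p.1 - Pi.single ⟨i, h⟩ 1, p.2) 1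
  else
    if p.2 ⟨(i : ℕ) - m, by have := i.isLt; omega⟩ = 1 then
      (q ^ (-(∑ s, (p.1 s : ℤ))) *
          (-q) ^ (-(∑ t ∈ Finset.univ.filter (fun t : Fin n => (t : ℕ) < (i : ℕ) - m),
            (p.2 t : ℤ)))) •
        Finsupp.single (p.1, p.2 - Pi.single ⟨(i : ℕ) - m, by have := i.isLt; omega⟩ 1) 1
    else 0

/-- The `q`-derivative `∂_i` on `Ω_q(m|n)` as a linear operator. -/
noncomputable def Dop {k : Type*} [Field k] (q : k) (m n : ℕ) (i : Fin (m + n)) :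
    Omega k m n →ₗ[k] Omega k m n :=
  Finsupp.lsum k fun p => LinearMap.toSpanSingleton k (Omega k m n) (Dimage q m n i p)

/-- The bicharacter value `θ(ε_i,ε_j)`: `q^{ε_i∗ε_j − ε_j∗ε_i}` if `i ∈ I₀` or
`j ∈ I₀`, and `(−q)^{ε_i∗ε_j − ε_j∗ε_i}` if `i, j ∈ I₁`. -/
noncomputable def theta {k : Type*} [Field k] (q : k) (m : ℕ) {N : ℕ} (i j : Fin N) : k :=
  if (i : ℕ) < m ∨ (j : ℕ) < m then
    q ^ (if j < i then (1 : ℤ) else if i < j then -1 else 0)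
  else (-q) ^ (if j < i then (1 : ℤ) else if i < j then -1 else 0)

open Finset

section helpers
variable {k : Type*} [Field k]

lemma Dop_single (q : k) (m n : ℕ) (i : Fin (m+n)) (p : OmegaIdx m n) (a : k) :
    Dop q m n i (Finsupp.single p a) = a • Dimage q m n i p := by
  simp [Dop]

lemma Dop_smul_single (q : k) (m n : ℕ) (i : Fin (m+n)) (p : OmegaIdx m n) (c : k) :
    Dop q m n i (c • Finsupp.single p (1:k)) = c • Dimage q m n i p := by
  rw [map_smul, Dop_single, one_smul]

lemma cast_sub_single {N : ℕ} (β : Fin N → ℕ) (j : Fin N) (hj : β j ≠ 0) (s : Fin N) :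
    (((β - Pi.single j 1 : Fin N → ℕ) s : ℕ) : ℤ) = (β s : ℤ) - (if s = j then 1 else 0) := by
  rcases eq_or_ne s j with rfl | hs
  · simp only [Pi.sub_apply, Pi.single_eq_same, if_pos rfl]
    rw [Nat.cast_sub (Nat.one_le_iff_ne_zero.mpr hj)]
    simp
  · simp [Pi.sub_apply, Pi.single_eq_of_ne hs, hs]

lemma sum_filter_sub_single {N : ℕ} (β : Fin N → ℕ) (j : Fin N) (hj : β j ≠ 0) (i : ℕ) :
    ∑ s ∈ univ.filter (fun s : Fin N => (s:ℕ) < i),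
        (((β - Pi.single j 1 : Fin N → ℕ) s : ℕ) : ℤ)
      = (∑ s ∈ univ.filter (fun s : Fin N => (s:ℕ) < i), (β s : ℤ))
        - (if (j:ℕ) < i then 1 else 0) := by
  simp only [cast_sub_single β j hj, Finset.sum_sub_distrib]
  congr 1
  rw [Finset.sum_ite_eq' _ j (fun _ => (1:ℤ))]
  simp

lemma sum_univ_sub_single {N : ℕ} (β : Fin N → ℕ) (j : Fin N) (hj : β j ≠ 0) :
    ∑ s, (((β - Pi.single j 1 : Fin N → ℕ) s : ℕ) : ℤ) = (∑ s, (β s : ℤ)) - 1 := by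
  simp only [cast_sub_single β j hj, Finset.sum_sub_distrib]
  simp [Finset.sum_ite_eq']

lemma sub_single_apply {N : ℕ} (β : Fin N → ℕ) (a s : Fin N) (h : s ≠ a) :
    (β - Pi.single a 1 : Fin N → ℕ) s = β s := by
  simp [Pi.sub_apply, Pi.single_eq_of_ne h]

lemma pi_sub_comm {N : ℕ} (β : Fin N → ℕ) (a b : Fin N) :
    β - Pi.single a 1 - Pi.single b 1 = β - Pi.single b 1 - Pi.single a 1 := by
  funext s
  simp only [Pi.sub_apply]
  omega

lemma scalarB (q y : k) (hq : q ≠ 0) (t c : ℤ) :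
    q ^ (-t) * y * q ^ c = q ^ (-1:ℤ) * q ^ c * (q ^ (-(t-1)) * y) := by
  have h : (-(t-1)) = -t + 1 := by ring
  rw [h, zpow_add₀ hq, zpow_neg_one, zpow_one]
  rw [show q⁻¹ * q ^ c * (q ^ (-t) * q * y) = (q⁻¹ * q) * (q ^ c * (q ^ (-t) * y)) from by
    ring, inv_mul_cancel₀ hq, one_mul]
  ring

lemma scalarC (q y : k) (hq : q ≠ 0) (t c : ℤ) :
    q ^ c * (q ^ (-(t-1)) * y) = q ^ (1:ℤ) * (q ^ (-t) * y) * q ^ c := by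
  have h : (-(t-1)) = -t + 1 := by ring
  rw [h, zpow_add₀ hq, zpow_one]
  ring

lemma scalarD1 (x r : k) (hr : r ≠ 0) (a b : ℤ) :
    x * r ^ (-a) * (x * r ^ (-b)) = r ^ (-1:ℤ) * (x * r ^ (-b)) * (x * r ^ (-(a-1))) := by
  have h : (-(a-1)) = -a + 1 := by ring
  rw [h, zpow_add₀ hr, zpow_one, zpow_neg_one]
  rw [show r⁻¹ * (x * r ^ (-b)) * (x * (r ^ (-a) * r)) =
      (r⁻¹ * r) * (x * r ^ (-b) * (x * r ^ (-a))) from by ring, inv_mul_cancel₀ hr, one_mul]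
  ring

lemma scalarD2 (x r : k) (hr : r ≠ 0) (a b : ℤ) :
    x * r ^ (-a) * (x * r ^ (-(b-1))) = r ^ (1:ℤ) * (x * r ^ (-b)) * (x * r ^ (-a)) := by
  have h : (-(b-1)) = -b + 1 := by ring
  rw [h, zpow_add₀ hr, zpow_one]
  ring

end helpers

section main
variable {k : Type*} [Field k]

lemma Dcomm (q : k) (hq : q ≠ 0) (m n : ℕ) (i j : Fin (m+n)) (hij : i ≠ j)
    (p : OmegaIdx m n) :
    Dop q m n i (Dimage q m n j p) = theta q m i j • Dop q m n j (Dimage q m n i p) := by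
  obtain ⟨β, μ⟩ := p
  have hijn : (i:ℕ) ≠ (j:ℕ) := fun h => hij (Fin.ext h)
  by_cases hi : (i:ℕ) < m <;> by_cases hj : (j:ℕ) < m
  · -- A : both bosonic
    have hij₀ : (⟨j, hj⟩ : Fin m) ≠ ⟨i, hi⟩ := by simp [Fin.ext_iff]; omega
    by_cases hβj : β ⟨j, hj⟩ = 0
    · by_cases hβi : β ⟨i, hi⟩ = 0
      · simp [Dimage, hi, hj, hβi, hβj]
      · simp [Dimage, hi, hj, hβi, hβj, Dop_single,
          sub_single_apply β ⟨i,hi⟩ ⟨j,hj⟩ hij₀]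
    · by_cases hβi : β ⟨i, hi⟩ = 0
      · simp [Dimage, hi, hj, hβi, hβj, Dop_single,
          sub_single_apply β ⟨j,hj⟩ ⟨i,hi⟩ hij₀.symm]
      · simp only [Dimage, dif_pos hi, dif_pos hj, if_neg hβj, if_neg hβi]
        rw [Dop_smul_single, Dop_smul_single]
        simp only [Dimage, dif_pos hi, dif_pos hj,
          sub_single_apply β ⟨i,hi⟩ ⟨j,hj⟩ hij₀,
          sub_single_apply β ⟨j,hj⟩ ⟨i,hi⟩ hij₀.symm,
          if_neg hβi, if_neg hβj,
          sum_filter_sub_single β ⟨i,hi⟩ hβi, sum_filter_sub_single β ⟨j,hj⟩ hβj]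
        rw [pi_sub_comm β ⟨j,hj⟩ ⟨i,hi⟩, smul_smul, smul_smul, smul_smul]
        congr 1
        simp only [theta, if_pos (Or.inl hi), Fin.lt_def]
        rcases lt_or_gt_of_ne hijn with h | h
        · simp only [Fin.val_mk, if_pos h, if_neg (by omega : ¬ (j:ℕ) < (i:ℕ))]
          simp only [← zpow_add₀ hq]
          congr 1
          ring
        · simp only [Fin.val_mk, if_pos h, if_neg (by omega : ¬ (i:ℕ) < (j:ℕ))]
          simp only [← zpow_add₀ hq]
          congr 1
          ring
  · -- B : i bosonic, j fermionic
    by_cases hμj : μ ⟨(j:ℕ) - m, by have := j.isLt; omega⟩ = 1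
    · by_cases hβi : β ⟨i, hi⟩ = 0
      · simp only [Dimage, dif_pos hi, dif_neg hj, if_pos hμj, if_pos hβi,
          map_zero, smul_zero]
        rw [Dop_smul_single]
        simp only [Dimage, dif_pos hi, if_pos hβi, dite_eq_ite, if_pos hi, smul_zero]
      · simp only [Dimage, dif_pos hi, dif_neg hj, if_pos hμj, if_neg hβi]
        rw [Dop_smul_single, Dop_smul_single]
        simp only [Dimage, dif_pos hi, dif_neg hj, if_neg hβi, if_pos hμj,
          sum_univ_sub_single β ⟨i,hi⟩ hβi]
        rw [smul_smul, smul_smul, smul_smul]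
        congr 1
        simp only [theta, if_pos (Or.inl hi), Fin.lt_def,
          if_pos (by omega : (i:ℕ) < (j:ℕ)), if_neg (by omega : ¬ (j:ℕ) < (i:ℕ))]
        exact scalarB q _ hq _ _
    · by_cases hβi : β ⟨i, hi⟩ = 0
      · simp [Dimage, hi, hj, hβi, hμj]
      · simp [Dimage, hi, hj, hβi, hμj, Dop_single]
  · -- C : i fermionic, j bosonic
    have hpi : (i:ℕ) - m < n := by have := i.isLt; omega
    by_cases hμi : μ ⟨(i:ℕ) - m, by have := i.isLt; omega⟩ = 1
    · by_cases hβj : β ⟨j, hj⟩ = 0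
      · simp only [Dimage, dif_neg hi, dif_pos hj, if_pos hβj, map_zero, smul_zero,
          if_pos hμi]
        rw [Dop_smul_single]
        simp only [Dimage, dif_pos hj, if_pos hβj, smul_zero]
      · simp only [Dimage, dif_neg hi, dif_pos hj, if_neg hβj, if_pos hμi]
        rw [Dop_smul_single, Dop_smul_single]
        simp only [Dimage, dif_neg hi, dif_pos hj, if_neg hβj, if_pos hμi,
          sum_univ_sub_single β ⟨j,hj⟩ hβj]
        rw [smul_smul, smul_smul, smul_smul]
        congr 1
        simp only [theta, if_pos (Or.inr hj), Fin.lt_def,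
          if_pos (by omega : (j:ℕ) < (i:ℕ))]
        exact scalarC q _ hq _ _
    · by_cases hβj : β ⟨j, hj⟩ = 0
      · simp only [Dimage, dif_neg hi, dif_pos hj, if_pos hβj, if_neg hμi,
          map_zero, smul_zero]
      · simp only [Dimage, dif_neg hi, dif_pos hj, if_neg hβj, if_neg hμi,
          map_zero, smul_zero]
        rw [Dop_smul_single]
        simp only [Dimage, dif_neg hi, if_neg hμi, smul_zero]
  · -- D : both fermionic
    have hpi : (i:ℕ) - m < n := by have := i.isLt; omega
    have hpj : (j:ℕ) - m < n := by have := j.isLt; omega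
    have hij₁ : (⟨(j:ℕ)-m, hpj⟩ : Fin n) ≠ ⟨(i:ℕ)-m, hpi⟩ := by
      simp only [ne_eq, Fin.ext_iff]; omega
    by_cases hμj : μ ⟨(j:ℕ)-m, hpj⟩ = 1
    · by_cases hμi : μ ⟨(i:ℕ)-m, hpi⟩ = 1
      · have hμj' : μ ⟨(j:ℕ)-m, hpj⟩ ≠ 0 := by omega
        have hμi' : μ ⟨(i:ℕ)-m, hpi⟩ ≠ 0 := by omega
        simp only [Dimage, dif_neg hi, dif_neg hj, if_pos hμj, if_pos hμi]
        rw [Dop_smul_single, Dop_smul_single]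
        simp only [Dimage, dif_neg hi, dif_neg hj,
          sub_single_apply μ ⟨(j:ℕ)-m,hpj⟩ ⟨(i:ℕ)-m,hpi⟩ hij₁.symm,
          sub_single_apply μ ⟨(i:ℕ)-m,hpi⟩ ⟨(j:ℕ)-m,hpj⟩ hij₁,
          if_pos hμi, if_pos hμj,
          sum_filter_sub_single μ ⟨(i:ℕ)-m,hpi⟩ hμi',
          sum_filter_sub_single μ ⟨(j:ℕ)-m,hpj⟩ hμj']
        rw [pi_sub_comm μ ⟨(j:ℕ)-m,hpj⟩ ⟨(i:ℕ)-m,hpi⟩, smul_smul, smul_smul, smul_smul]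
        congr 1
        have hq' : (-q) ≠ 0 := neg_ne_zero.mpr hq
        simp only [theta, if_neg (by omega : ¬((i:ℕ) < m ∨ (j:ℕ) < m)), Fin.lt_def,
          Fin.val_mk]
        rcases lt_or_gt_of_ne hijn with h | h
        · simp only [if_pos (by omega : (i:ℕ) - m < (j:ℕ) - m),
            if_neg (by omega : ¬ (j:ℕ) - m < (i:ℕ) - m),
            if_pos (by omega : (i:ℕ) < (j:ℕ)), if_neg (by omega : ¬ (j:ℕ) < (i:ℕ)),
            sub_zero]
          exact scalarD1 _ _ hq' _ _
        · simp only [if_pos (by omega : (j:ℕ) - m < (i:ℕ) - m),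
            if_neg (by omega : ¬ (i:ℕ) - m < (j:ℕ) - m),
            if_pos (by omega : (j:ℕ) < (i:ℕ)),
            sub_zero]
          exact scalarD2 _ _ hq' _ _
      · simp only [Dimage, dif_neg hi, dif_neg hj, if_pos hμj, if_neg hμi,
          map_zero, smul_zero]
        rw [Dop_smul_single]
        simp only [Dimage, dif_neg hi,
          sub_single_apply μ ⟨(j:ℕ)-m,hpj⟩ ⟨(i:ℕ)-m,hpi⟩ hij₁.symm,
          if_neg hμi, smul_zero]
    · by_cases hμi : μ ⟨(i:ℕ)-m, hpi⟩ = 1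
      · simp only [Dimage, dif_neg hi, dif_neg hj, if_neg hμj, if_pos hμi,
          map_zero, smul_zero]
        rw [Dop_smul_single]
        simp only [Dimage, dif_neg hj,
          sub_single_apply μ ⟨(i:ℕ)-m,hpi⟩ ⟨(j:ℕ)-m,hpj⟩ hij₁,
          if_neg hμj, smul_zero]
      · simp only [Dimage, dif_neg hi, dif_neg hj, if_neg hμj, if_neg hμi,
          map_zero, smul_zero]

end main

section final
variable {k : Type*} [Field k]

lemma Dsq (q : k) (m n : ℕ) (j : Fin (m+n)) (hj : m ≤ (j:ℕ)) (p : OmegaIdx m n) :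
    Dop q m n j (Dimage q m n j p) = 0 := by
  obtain ⟨β, μ⟩ := p
  have hj' : ¬ (j:ℕ) < m := by omega
  have hpj : (j:ℕ) - m < n := by have := j.isLt; omega
  by_cases hμj : μ ⟨(j:ℕ)-m, hpj⟩ = 1
  · simp only [Dimage, dif_neg hj', if_pos hμj]
    rw [Dop_smul_single]
    have hz : (μ - Pi.single ⟨(j:ℕ)-m,hpj⟩ 1 : Fin n → ℕ) ⟨(j:ℕ)-m,hpj⟩ = 0 := by
      simp [Pi.sub_apply, Pi.single_eq_same, hμj]
    simp only [Dimage, dif_neg hj', hz, if_neg (by omega : ¬ (0:ℕ) = 1), smul_zero]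
  · simp only [Dimage, dif_neg hj', if_neg hμj, map_zero]

end final


/-- The `q`-derivatives on `Ω_q(m|n)` satisfy `∂_i ∂_j = θ(ε_i,ε_j) ∂_j ∂_i` for
`i ≠ j`, `∂_j² = 0` for `j ∈ I₁`; in particular for `i < j`: `∂_j∂_i = q ∂_i∂_j`
when `i ∈ I₀`, and `∂_j∂_i = −q ∂_i∂_j` when `i, j ∈ I₁`. -/
theorem Dop_relations {k : Type*} [Field k] (q : k) (hq : q ≠ 0) (m n : ℕ) :
    (∀ i j : Fin (m + n), i ≠ j →
      (Dop q m n i).comp (Dop q m n j) = theta q m i j • (Dop q m n j).comp (Dop q m n i)) ∧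
    (∀ j : Fin (m + n), m ≤ (j : ℕ) → (Dop q m n j).comp (Dop q m n j) = 0) ∧
    (∀ i j : Fin (m + n), i < j → (i : ℕ) < m →
      (Dop q m n j).comp (Dop q m n i) = q • (Dop q m n i).comp (Dop q m n j)) ∧
    (∀ i j : Fin (m + n), i < j → m ≤ (i : ℕ) →
      (Dop q m n j).comp (Dop q m n i) = (-q) • (Dop q m n i).comp (Dop q m n j)) := by
  have key : ∀ i j : Fin (m+n), i ≠ j → (Dop q m n i).comp (Dop q m n j)
      = theta q m i j • (Dop q m n j).comp (Dop q m n i) := by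
    intro i j hij
    apply Finsupp.lhom_ext
    intro p a
    simp only [LinearMap.comp_apply, LinearMap.smul_apply, Dop_single, map_smul,
      Dcomm q hq m n i j hij p]
    rw [smul_comm]
  refine ⟨key, ?_, ?_, ?_⟩
  · intro j hj
    apply Finsupp.lhom_ext
    intro p a
    simp only [LinearMap.comp_apply, Dop_single, map_smul, Dsq q m n j hj p,
      smul_zero, LinearMap.zero_apply]
  · intro i j hlt hi
    have h := key i j (ne_of_lt hlt)
    have hth : theta q m i j = q⁻¹ := by
      rw [theta, if_pos (Or.inl hi), if_neg (asymm hlt), if_pos hlt, zpow_neg_one]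
    rw [h, smul_smul, hth, mul_inv_cancel₀ hq, one_smul]
  · intro i j hlt hi
    have hjm : ¬ ((i:ℕ) < m ∨ (j:ℕ) < m) := by
      have : (i:ℕ) < (j:ℕ) := hlt
      omega
    have h := key i j (ne_of_lt hlt)
    have hth : theta q m i j = (-q)⁻¹ := by
      rw [theta, if_neg hjm, if_neg (asymm hlt), if_pos hlt, zpow_neg_one]
    rw [h, smul_smul, hth, mul_inv_cancel₀ (neg_ne_zero.mpr hq), one_smul]
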